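/- arXiv:2209.08518 — 6 statements merged into one kernel-verified Lean document; each statement's English description precedes it below -/
import Mathlib

section
/- Let X be an at most countable set and T : X → X such that the graph G_T (with edges {(Tx,x) : x ∈ X}) is connected. Then G_T contains at most one strongly connected component with a non-empty set of edges. -/
/-- Mutual reachability (by directed paths) in a directed graph with edge relation `E`. -/
def StronglyConn {V : Type*} (E : V → V → Prop) (v w : V) : Prop :=
  Relation.ReflTransGen E v w ∧ Relation.ReflTransGen E w v

/-- The strongly connected component of a vertex `v`. -/
def SCC {V : Type*} (E : V → V → Prop) (v : V) : Set V :=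
  {u | StronglyConn E v u}

lemma reach_iff {X : Type*} (T : X → X) (v w : X) :
    Relation.ReflTransGen (fun a b => T b = a) v w ↔ ∃ n, T^[n] w = v := by
  constructor
  · intro h
    induction h with
    | refl => exact ⟨0, rfl⟩
    | tail _ hbc ih =>
      obtain ⟨n, hn⟩ := ih
      exact ⟨n + 1, by rw [Function.iterate_succ_apply, hbc, hn]⟩
  · rintro ⟨n, hn⟩
    induction n generalizing w with
    | zero => simpa using (hn ▸ Relation.ReflTransGen.refl)
    | succ n ih =>
      rw [Function.iterate_succ_apply] at hn
      exact (ih (T w) hn).tail rfl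

/-- A vertex whose SCC contains an edge is periodic. -/
lemma periodic_of_edge {X : Type*} (T : X → X) (v : X)
    (h : ∃ a b : X, a ∈ SCC (fun a b => T b = a) v ∧ b ∈ SCC (fun a b => T b = a) v ∧
      T b = a) : ∃ k, 0 < k ∧ T^[k] v = v := by
  obtain ⟨a, b, ha, hb, hab⟩ := h
  obtain ⟨n, hn⟩ := (reach_iff T v a).1 ha.1
  obtain ⟨q, hq⟩ := (reach_iff T b v).1 hb.2
  refine ⟨n + (q + 1), Nat.succ_pos _ |>.trans_le (Nat.le_add_left _ _), ?_⟩
  have : T^[q + 1] v = a := by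
    rw [Function.iterate_succ_apply', hq, hab]
  rw [Function.iterate_add_apply, this, hn]

lemma common_desc {X : Type*} (T : X → X) (v w : X)
    (h : Relation.ReflTransGen (fun a b => T b = a ∨ T a = b) v w) :
    ∃ i j, T^[i] v = T^[j] w := by
  induction h with
  | refl => exact ⟨0, 0, rfl⟩
  | tail _ hbc ih =>
    obtain ⟨i, j, hij⟩ := ih
    rcases hbc with h | h
    · exact ⟨i, j + 1, by rw [Function.iterate_succ_apply, h, hij]⟩
    · exact ⟨i + 1, j, by
        rw [Function.iterate_succ_apply', hij, ← h, ← Function.iterate_succ_apply,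
          Function.iterate_succ_apply']⟩

/-- If `X` is at most countable and `T : X → X` is such that the graph `G_T`
(edges `{(Tx, x) : x ∈ X}`) is connected (as an undirected graph), then `G_T` contains at
most one strongly connected component with a non-empty set of edges: any two such
components coincide. -/
theorem stmt_5 {X : Type*} [Countable X] (T : X → X)
    (hconn : ∀ v w : X,
      Relation.ReflTransGen (fun a b => T b = a ∨ T a = b) v w)
    (v₀ v₁ : X)
    (h₀ : ∃ a b : X, a ∈ SCC (fun a b => T b = a) v₀ ∧ b ∈ SCC (fun a b => T b = a) v₀ ∧
      T b = a)
    (h₁ : ∃ a b : X, a ∈ SCC (fun a b => T b = a) v₁ ∧ b ∈ SCC (fun a b => T b = a) v₁ ∧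
      T b = a) :
    SCC (fun a b => T b = a) v₀ = SCC (fun a b => T b = a) v₁ := by
  obtain ⟨k, hk, hkper⟩ := periodic_of_edge T v₀ h₀
  obtain ⟨m, hm, hmper⟩ := periodic_of_edge T v₁ h₁
  have hcomm := common_desc T v₀ v₁ (hconn v₀ v₁)
  obtain ⟨i, j, hij⟩ := hcomm
  -- v₀ = T^[k*i] v₀, etc.
  have hkN : ∀ N, T^[k * N] v₀ = v₀ := by
    intro N
    induction N with
    | zero => rfl
    | succ N ih => rw [Nat.mul_succ, Function.iterate_add_apply, hkper, ih]
  have hmN : ∀ N, T^[m * N] v₁ = v₁ := by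
    intro N
    induction N with
    | zero => rfl
    | succ N ih => rw [Nat.mul_succ, Function.iterate_add_apply, hmper, ih]
  have hle : i ≤ k * i := Nat.le_mul_of_pos_left i hk
  have hle' : j ≤ m * j := Nat.le_mul_of_pos_left j hm
  have h01 : ∃ n, T^[n] v₁ = v₀ := by
    refine ⟨k * i - i + j, ?_⟩
    rw [Function.iterate_add_apply, ← hij, ← Function.iterate_add_apply,
      Nat.sub_add_cancel hle, hkN]
  have h10 : ∃ n, T^[n] v₀ = v₁ := by
    refine ⟨m * j - j + i, ?_⟩
    rw [Function.iterate_add_apply, hij, ← Function.iterate_add_apply,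
      Nat.sub_add_cancel hle', hmN]
  have hsc : StronglyConn (fun a b => T b = a) v₀ v₁ :=
    ⟨(reach_iff T v₀ v₁).2 h01, (reach_iff T v₁ v₀).2 h10⟩
  ext u
  constructor
  · rintro ⟨h1, h2⟩
    exact ⟨hsc.2.trans h1, h2.trans hsc.1⟩
  · rintro ⟨h1, h2⟩
    exact ⟨hsc.1.trans h1, h2.trans hsc.2⟩
end

section
/- Let X be countable, T : X → X with G_T connected, and let G_0 = (V_0,E_0) be the unique strongly connected component of G_T with non-empty edge set. Form G' = (V_T \ V_0, E') where E' consists of edges of G_T with both endpoints outside V_0. Then every connected component of G' is a rooted directed tree, i.e. a directed tree possessing a (unique) vertex of in-degree 0. -/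
private lemma rtg_iter {X : Type*} (T : X → X) (n : ℕ) (w : X) :
    Relation.ReflTransGen (fun a b => T b = a) (T^[n] w) w := by
  induction n with
  | zero => exact .refl
  | succ n ih =>
      exact Relation.ReflTransGen.head (Function.iterate_succ_apply' T n w).symm ih

private lemma exists_iter_of_rtg {X : Type*} (T : X → X) {v w : X}
    (h : Relation.ReflTransGen (fun a b => T b = a) v w) : ∃ n, T^[n] w = v := by
  induction h with
  | refl => exact ⟨0, rfl⟩
  | @tail b c _ hbc ih =>
      obtain ⟨n, hn⟩ := ih
      exact ⟨n + 1, by rw [Function.iterate_succ_apply, hbc, hn]⟩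

private lemma meet_orbits {X : Type*} (T : X → X) {v w : X}
    (h : Relation.ReflTransGen (fun a b => T b = a ∨ T a = b) v w) :
    ∃ k m, T^[k] v = T^[m] w := by
  induction h with
  | refl => exact ⟨0, 0, rfl⟩
  | @tail b c _ hbc ih =>
      obtain ⟨k, m, hkm⟩ := ih
      rcases hbc with h1 | h2
      · exact ⟨k, m + 1, by rw [hkm, Function.iterate_succ_apply, h1]⟩
      · refine ⟨k + 1, m, ?_⟩
        rw [Function.iterate_succ_apply' T k v, hkm, ← Function.iterate_succ_apply' T m b,
          Function.iterate_succ_apply T m b, h2]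

private lemma periodic_return {X : Type*} (T : X → X) {z : X} {p : ℕ}
    (hp : 0 < p) (hz : T^[p] z = z) (m : ℕ) : ∃ r, T^[r] (T^[m] z) = z := by
  refine ⟨p * (m + 1) - m, ?_⟩
  rw [← Function.iterate_add_apply]
  have hle : m ≤ p * (m + 1) := le_trans (Nat.le_succ m) (Nat.le_mul_of_pos_left _ hp)
  rw [Nat.sub_add_cancel hle, Function.iterate_mul]
  exact Function.iterate_fixed hz (m + 1)

/-- Let `G_T` (edges `{(Tx, x) : x ∈ X}`) be connected and let `V₀` be the (unique)
strongly connected component with non-empty edge set.  Remove `V₀` and all edges meeting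
it, obtaining `G' = (X \ V₀, E')`.  Then every connected component of `G'` (say, the
component `K` of a vertex `u ∉ V₀`) is a rooted directed tree: within `K` the graph is
connected, has no directed cycles, every vertex has in-degree at most 1, and there is a
unique vertex of in-degree 0 (the root). -/
theorem stmt_7 {X : Type*} [Countable X] (T : X → X)
    (hconn : ∀ v w : X,
      Relation.ReflTransGen (fun a b => T b = a ∨ T a = b) v w)
    (v₀ : X)
    (h₀ : ∃ a b : X, a ∈ SCC (fun a b => T b = a) v₀ ∧ b ∈ SCC (fun a b => T b = a) v₀ ∧
      T b = a)
    (u : X) (hu : u ∉ SCC (fun a b => T b = a) v₀) :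
    ∀ E' : X → X → Prop, (E' = fun a b =>
        T b = a ∧ a ∉ SCC (fun a b => T b = a) v₀ ∧ b ∉ SCC (fun a b => T b = a) v₀) →
    ∀ K : Set X, (K = {x | Relation.ReflTransGen (fun a b => E' a b ∨ E' b a) u x}) →
      (∀ a ∈ K, ∀ b ∈ K, Relation.ReflTransGen (fun s t => (E' s t ∨ E' t s)) a b) ∧
      (∀ a b : X, E' a b → ¬ Relation.ReflTransGen E' b a) ∧
      (∀ x a b : X, E' a x → E' b x → a = b) ∧
      (∃! ω : X, ω ∈ K ∧ ∀ x ∈ K, ¬ E' x ω) := by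
  classical
  intro E' hE' K hK
  set V : Set X := SCC (fun a b => T b = a) v₀ with hVdef
  have hE'iff : ∀ a b, E' a b ↔ (T b = a ∧ a ∉ V ∧ b ∉ V) := by
    intro a b; simp only [hE', hVdef]
  have hKiff : ∀ x, x ∈ K ↔ Relation.ReflTransGen (fun a b => E' a b ∨ E' b a) u x := by
    intro x; simp only [hK, Set.mem_setOf_eq]
  have hVmem : ∀ x, x ∈ V ↔ (∃ n, T^[n] x = v₀) ∧ (∃ s, T^[s] v₀ = x) := by
    intro x
    constructor
    · rintro ⟨h1, h2⟩
      exact ⟨exists_iter_of_rtg T h1, exists_iter_of_rtg T h2⟩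
    · rintro ⟨⟨n, hn⟩, ⟨s, hs⟩⟩
      constructor
      · rw [← hn]; exact rtg_iter T n x
      · rw [← hs]; exact rtg_iter T s v₀
  -- v₀ is periodic
  obtain ⟨a₀, b₀, ha₀, hb₀, hab₀⟩ := h₀
  obtain ⟨⟨na, hna⟩, -⟩ := (hVmem a₀).1 ha₀
  obtain ⟨-, ⟨sb, hsb⟩⟩ := (hVmem b₀).1 hb₀
  have hpfix : T^[na + 1 + sb] v₀ = v₀ := by
    rw [Function.iterate_add_apply, hsb, Function.iterate_succ_apply, hab₀, hna]
  have hppos : 0 < na + 1 + sb := by omega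
  -- the forward orbit of v₀ is in V
  have hOrb : ∀ m, T^[m] v₀ ∈ V := by
    intro m
    exact (hVmem _).2 ⟨periodic_return T hppos hpfix m, ⟨m, rfl⟩⟩
  -- periodic points lie in V
  have hper_mem : ∀ x n, 0 < n → T^[n] x = x → x ∈ V := by
    intro x n hn hx
    obtain ⟨k, m, hkm⟩ := meet_orbits T (hconn x v₀)
    obtain ⟨r, hr⟩ := periodic_return T hppos hpfix m
    have h1 : T^[r + k] x = v₀ := by rw [Function.iterate_add_apply, hkm, hr]
    obtain ⟨r', hr'⟩ := periodic_return T hn hx (r + k)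
    refine (hVmem x).2 ⟨⟨r + k, h1⟩, ⟨r', ?_⟩⟩
    rw [← h1]; exact hr'
  -- every point eventually reaches V
  have hreach : ∀ x : X, ∃ k, T^[k] x ∈ V := by
    intro x
    obtain ⟨k, m, hkm⟩ := meet_orbits T (hconn x v₀)
    exact ⟨k, by rw [hkm]; exact hOrb m⟩
  have hmspec : ∀ x, T^[Nat.find (hreach x)] x ∈ V := fun x => Nat.find_spec (hreach x)
  have hmmin : ∀ x i, i < Nat.find (hreach x) → T^[i] x ∉ V :=
    fun x i hi => Nat.find_min (hreach x) hi
  have hmpos : ∀ x, x ∉ V → 0 < Nat.find (hreach x) := by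
    intro x hx
    rcases Nat.eq_zero_or_pos (Nat.find (hreach x)) with h | h
    · exact absurd (by simpa [h] using hmspec x) hx
    · exact h
  -- along an E'-edge the "exit vertex" is preserved
  have hedge : ∀ a b, E' a b →
      T^[Nat.find (hreach a) - 1] a = T^[Nat.find (hreach b) - 1] b := by
    intro a b hab
    obtain ⟨h1, ha, hb⟩ := (hE'iff a b).1 hab
    have hiter : ∀ j, T^[j + 1] b = T^[j] a := by
      intro j; rw [Function.iterate_succ_apply, h1]
    have hle : Nat.find (hreach b) ≤ Nat.find (hreach a) + 1 :=
      Nat.find_min' (hreach b) (by rw [hiter]; exact hmspec a)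
    have hbpos : 0 < Nat.find (hreach b) := hmpos b hb
    have hge : Nat.find (hreach a) + 1 ≤ Nat.find (hreach b) := by
      by_contra hlt
      push_neg at hlt
      have h3 : T^[Nat.find (hreach b)] b ∈ V := hmspec b
      have h4 : T^[Nat.find (hreach b) - 1] a ∉ V := hmmin a _ (by omega)
      rw [← hiter, Nat.sub_add_cancel hbpos] at h4
      exact h4 h3
    have heq : Nat.find (hreach b) = Nat.find (hreach a) + 1 := le_antisymm hle hge
    have hapos : 0 < Nat.find (hreach a) := hmpos a ha
    rw [heq, Nat.add_sub_cancel]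
    conv_rhs => rw [show Nat.find (hreach a) = (Nat.find (hreach a) - 1) + 1 from
      (Nat.succ_pred_eq_of_pos hapos).symm, hiter]
  -- the exit vertex is constant on K, and K avoids V
  have hconst : ∀ x ∈ K, x ∉ V ∧
      T^[Nat.find (hreach x) - 1] x = T^[Nat.find (hreach u) - 1] u := by
    intro x hx
    rw [hKiff] at hx
    induction hx with
    | refl => exact ⟨hu, rfl⟩
    | @tail b c _ hbc ih =>
        obtain ⟨hbV, hbrho⟩ := ih
        rcases hbc with h | h
        · refine ⟨((hE'iff b c).1 h).2.2, ?_⟩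
          rw [← hedge b c h]; exact hbrho
        · refine ⟨((hE'iff c b).1 h).2.1, ?_⟩
          rw [hedge c b h]; exact hbrho
  -- being a root is the same as `T ω ∈ V`
  have hrootiff : ∀ ω ∈ K, ((∀ x ∈ K, ¬ E' x ω) ↔ T ω ∈ V) := by
    intro ω hω
    have hωV : ω ∉ V := (hconst ω hω).1
    constructor
    · intro h
      by_contra hTV
      have he : E' (T ω) ω := (hE'iff _ _).2 ⟨rfl, hTV, hωV⟩
      have hTK : T ω ∈ K := by
        rw [hKiff] at hω ⊢
        exact hω.tail (Or.inr he)
      exact h _ hTK he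
    · intro h x _ hx
      have h2 := (hE'iff x ω).1 hx
      exact h2.2.1 (h2.1 ▸ h)
  -- roots equal the exit vertex of u
  have hroot_eq : ∀ ω ∈ K, T ω ∈ V → ω = T^[Nat.find (hreach u) - 1] u := by
    intro ω hω hTω
    have hωV : ω ∉ V := (hconst ω hω).1
    have h1 : Nat.find (hreach ω) = 1 := by
      have hle : Nat.find (hreach ω) ≤ 1 := Nat.find_min' (hreach ω) (by simpa using hTω)
      have := hmpos ω hωV
      omega
    have h2 := (hconst ω hω).2
    rwa [h1] at h2
  -- the chain from u to its exit vertex lies in K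
  have hchain : ∀ j, j < Nat.find (hreach u) → T^[j] u ∈ K := by
    intro j
    induction j with
    | zero => intro _; rw [hKiff]; exact .refl
    | succ j ih =>
        intro hj
        have h1 : T^[j] u ∈ K := ih (by omega)
        have hjV : T^[j] u ∉ V := hmmin u j (by omega)
        have hj1V : T^[j + 1] u ∉ V := hmmin u (j + 1) hj
        have he : E' (T^[j + 1] u) (T^[j] u) :=
          (hE'iff _ _).2 ⟨(Function.iterate_succ_apply' T j u).symm, hj1V, hjV⟩
        rw [hKiff] at h1 ⊢
        exact h1.tail (Or.inr he)
  have hmu : 0 < Nat.find (hreach u) := hmpos u hu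
  have hωK : T^[Nat.find (hreach u) - 1] u ∈ K := hchain _ (by omega)
  have hTω : T (T^[Nat.find (hreach u) - 1] u) ∈ V := by
    have h := hmspec u
    rw [show Nat.find (hreach u) = (Nat.find (hreach u) - 1) + 1 from by omega] at h
    rwa [Function.iterate_succ_apply'] at h
  refine ⟨?_, ?_, ?_, ?_⟩
  · -- connectivity within K
    intro a ha b hb
    rw [hKiff] at ha hb
    have hsymm : Symmetric fun s t => E' s t ∨ E' t s := fun x y h => h.symm
    exact ((@Relation.ReflTransGen.symmetric _ _ ⟨fun x y h => hsymm h⟩).symm _ _ ha).trans hb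
  · -- no directed cycles
    intro a b hab hba
    have h1 := (hE'iff a b).1 hab
    have h2 : Relation.ReflTransGen (fun a b => T b = a) b a :=
      Relation.ReflTransGen.mono (fun x y h => ((hE'iff x y).1 h).1) _ _ hba
    obtain ⟨n, hn⟩ := exists_iter_of_rtg T h2
    have h3 : T^[n + 1] b = b := by rw [Function.iterate_succ_apply, h1.1, hn]
    exact h1.2.2 (hper_mem b (n + 1) (Nat.succ_pos n) h3)
  · -- in-degree at most 1
    intro x a b ha hb
    have h1 := ((hE'iff a x).1 ha).1
    have h2 := ((hE'iff b x).1 hb).1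
    rw [← h1, ← h2]
  · -- unique root
    refine ⟨T^[Nat.find (hreach u) - 1] u, ⟨hωK, (hrootiff _ hωK).2 hTω⟩, ?_⟩
    rintro ω' ⟨hω'K, hroot'⟩
    exact hroot_eq ω' hω'K ((hrootiff ω' hω'K).1 hroot')
end

section
/- Let X be an at most countable set and T : X → X such that the associated graph G_T (vertices X, edges {(Tx,x) : x ∈ X}) is connected. Then exactly one of the following holds: (1) G_T is a rootless directed tree; (2) there exist κ ≥ 1 and distinct vertices v_0, …, v_{κ-1} forming a simple cycle in G_T, and a partition R of V_T \ {v_0,…,v_{κ-1}} such that each block R ∈ R, with the induced edges, is a rooted directed tree whose root ω_R receives exactly one edge (v_{i_R}, ω_R) from exactly one cycle vertex v_{i_R}. -/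
private lemma aux_chain {X : Type*} (T : X → X) {a b : X}
    (h : Relation.ReflTransGen (fun s t => T t = s) b a) :
    ∃ n, T^[n] a = b := by
  induction h with
  | refl => exact ⟨0, rfl⟩
  | tail h1 h2 ih =>
    obtain ⟨n, hn⟩ := ih
    exact ⟨n + 1, by rw [Function.iterate_succ_apply, h2, hn]⟩

private lemma aux_chainR {X : Type*} (T : X → X) (R : Set X) {a b : X}
    (h : Relation.ReflTransGen (fun s t => T t = s ∧ s ∈ R ∧ t ∈ R) b a) :
    ∃ n, T^[n] a = b := by
  induction h with
  | refl => exact ⟨0, rfl⟩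
  | tail h1 h2 ih =>
    obtain ⟨n, hn⟩ := ih
    exact ⟨n + 1, by rw [Function.iterate_succ_apply, h2.1, hn]⟩

private lemma aux_down {X : Type*} (T : X → X) (k : ℕ) (x : X) :
    Relation.ReflTransGen (fun s t => T t = s) (T^[k] x) x := by
  induction k with
  | zero => exact .refl
  | succ k ih => exact .head (Function.iterate_succ_apply' T k x).symm ih

private lemma aux_merge {X : Type*} (T : X → X) {v w : X}
    (h : Relation.ReflTransGen (fun a b => T b = a ∨ T a = b) v w) :
    ∃ m n, T^[m] v = T^[n] w := by
  induction h with
  | refl => exact ⟨0, 0, rfl⟩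
  | tail h1 h2 ih =>
    obtain ⟨m, n, hmn⟩ := ih
    rcases h2 with h2 | h2
    · exact ⟨m, n + 1, by rw [Function.iterate_succ_apply, h2, hmn]⟩
    · refine ⟨m + 1, n, ?_⟩
      rw [← h2, Function.iterate_succ_apply' T m v, hmn,
        ← Function.iterate_succ_apply' T n, Function.iterate_succ_apply]

open Fin.NatCast Fin.CommRing in
private lemma aux_cyc_iter {X : Type*} (T : X → X) {κ : ℕ} (f : Fin (κ + 1) → X)
    (hcyc : ∀ j : Fin (κ + 1), T (f (j + 1)) = f j) (m : ℕ) (j : Fin (κ + 1)) :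
    T^[m] (f (j + (m : Fin (κ + 1)))) = f j := by
  induction m with
  | zero => simp
  | succ m ih =>
    have : ((m + 1 : ℕ) : Fin (κ + 1)) = (m : Fin (κ + 1)) + 1 := by push_cast; ring
    rw [this, ← add_assoc, Function.iterate_succ_apply, hcyc, ih]

/-- Classification of the graph `G_T` (vertices `X`, edges `{(Tx, x) : x ∈ X}`) of a
self-map `T` of an at most countable set `X`, assuming `G_T` is connected: exactly one of
the following holds. (1) `G_T` is a rootless directed tree (no directed cycles, in-degree
at most 1, every vertex has an incoming edge).  (2) There are `κ ≥ 1` distinct vertices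
`v_0, …, v_{κ-1}` forming a simple cycle, and a partition `𝓡` of the remaining vertices
such that every block `R ∈ 𝓡` with the induced edges is a rooted directed tree whose
root `ω_R` receives exactly one edge from exactly one cycle vertex. -/
theorem stmt_8 {X : Type*} [Countable X] (T : X → X)
    (hconn : ∀ v w : X,
      Relation.ReflTransGen (fun a b => T b = a ∨ T a = b) v w) :
    Xor'
      -- (1) `G_T` is a rootless directed tree
      ((∀ a b : X, T b = a → ¬ Relation.ReflTransGen (fun s t => T t = s) b a) ∧
        (∀ x a b : X, T x = a → T x = b → a = b) ∧
        (∀ v : X, ∃ u : X, T v = u))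
      -- (2) `G_T` has a simple cycle with rooted directed trees attached
      (∃ κ : ℕ, ∃ f : Fin (κ + 1) → X, Function.Injective f ∧
        (∀ j : Fin (κ + 1), T (f (j + 1)) = f j) ∧
        ∃ 𝓡 : Set (Set X),
          (∀ R ∈ 𝓡, R.Nonempty) ∧
          (𝓡.Pairwise fun R R' => Disjoint R R') ∧
          (⋃₀ 𝓡 = {x : X | x ∉ Set.range f}) ∧
          (∀ R ∈ 𝓡,
            -- connected within `R` (undirectedly)
            (∀ a ∈ R, ∀ b ∈ R, Relation.ReflTransGen
              (fun s t => (T t = s ∧ s ∈ R ∧ t ∈ R) ∨ (T s = t ∧ s ∈ R ∧ t ∈ R)) a b) ∧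
            -- no directed cycles within `R`
            (∀ a b : X, (T b = a ∧ a ∈ R ∧ b ∈ R) →
              ¬ Relation.ReflTransGen (fun s t => T t = s ∧ s ∈ R ∧ t ∈ R) b a) ∧
            -- root of `R`, joined to exactly one cycle vertex
            (∃ ω ∈ R, (∀ x ∈ R, ¬ (T ω = x)) ∧ ∃! i : Fin (κ + 1), T ω = f i))) := by
  classical
  by_cases hper : ∃ x : X, ∃ p : ℕ, 0 < p ∧ T^[p] x = x
  · -- case (2)
    right
    obtain ⟨x₀, p₀, hp₀, hx₀⟩ := hper
    have hnpos : 0 < Function.minimalPeriod T x₀ :=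
      Function.IsPeriodicPt.minimalPeriod_pos hp₀ hx₀
    obtain ⟨κ, hκ⟩ : ∃ κ : ℕ, Function.minimalPeriod T x₀ = κ + 1 :=
      ⟨Function.minimalPeriod T x₀ - 1, by omega⟩
    have hiter : T^[κ + 1] x₀ = x₀ := by
      rw [← hκ]; exact Function.iterate_minimalPeriod
    have hmod : ∀ m : ℕ, T^[m % (κ + 1)] x₀ = T^[m] x₀ := by
      intro m
      have := Function.iterate_mod_minimalPeriod_eq (f := T) (x := x₀) (n := m)
      rwa [hκ] at this
    have hinjOn : ∀ a b : ℕ, a < κ + 1 → b < κ + 1 → T^[a] x₀ = T^[b] x₀ → a = b := by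
      intro a b ha hb h
      exact Function.iterate_injOn_Iio_minimalPeriod
        (show a ∈ Set.Iio _ by rw [hκ]; exact ha)
        (show b ∈ Set.Iio _ by rw [hκ]; exact hb) h
    set f : Fin (κ + 1) → X := fun j => T^[(κ + 1 - j.val) % (κ + 1)] x₀ with hf
    have hinj : Function.Injective f := by
      intro i j hij
      have heq := hinjOn _ _ (Nat.mod_lt _ (Nat.succ_pos κ))
        (Nat.mod_lt _ (Nat.succ_pos κ)) hij
      have key : ∀ a : ℕ, a < κ + 1 →
          (κ + 1 - a) % (κ + 1) = if a = 0 then 0 else κ + 1 - a := by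
        intro a ha
        rcases Nat.eq_zero_or_pos a with rfl | h
        · simp
        · rw [if_neg h.ne', Nat.mod_eq_of_lt (by omega)]
      rw [key i.val i.isLt, key j.val j.isLt] at heq
      apply Fin.ext
      split_ifs at heq <;> omega
    have hcyc : ∀ j : Fin (κ + 1), T (f (j + 1)) = f j := by
      intro j
      have hval : ((j + 1 : Fin (κ + 1)) : ℕ) = (j.val + 1) % (κ + 1) := by
        rw [Fin.val_add, Fin.val_one']
        conv_rhs => rw [Nat.add_mod, Nat.mod_eq_of_lt j.isLt]
      show T (T^[(κ + 1 - ((j + 1 : Fin (κ + 1)) : ℕ)) % (κ + 1)] x₀)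
        = T^[(κ + 1 - j.val) % (κ + 1)] x₀
      rw [hval,
        ← Function.iterate_succ_apply' T ((κ + 1 - (j.val + 1) % (κ + 1)) % (κ + 1)) x₀,
        ← hmod ((κ + 1 - (j.val + 1) % (κ + 1)) % (κ + 1) + 1)]
      congr 1
      rcases Nat.eq_or_lt_of_le (Nat.succ_le_of_lt j.isLt) with h1 | h1
      · have h0 : (j.val + 1) % (κ + 1) = 0 := by
          have h2 : (j.val : ℕ) + 1 = κ + 1 := h1
          rw [h2, Nat.mod_self]
        rw [h0, Nat.sub_zero, Nat.mod_self, Nat.zero_add, show κ + 1 - j.val = 1 by omega]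
      · rw [Nat.mod_eq_of_lt h1, Nat.mod_eq_of_lt (show κ + 1 - (j.val + 1) < κ + 1 by omega)]
        congr 1
        omega
    set C := Set.range f with hC
    have memC : ∀ k : ℕ, T^[k] x₀ ∈ C := by
      intro k
      rw [← hmod k]
      have hrn : k % (κ + 1) < κ + 1 := Nat.mod_lt _ (Nat.succ_pos κ)
      rcases Nat.eq_zero_or_pos (k % (κ + 1)) with h0 | h0
      · rw [h0]
        exact ⟨0, by simp [hf]⟩
      · refine ⟨⟨κ + 1 - k % (κ + 1), by omega⟩, ?_⟩
        show T^[(κ + 1 - (κ + 1 - k % (κ + 1))) % (κ + 1)] x₀ = T^[k % (κ + 1)] x₀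
        rw [show κ + 1 - (κ + 1 - k % (κ + 1)) = k % (κ + 1) by omega, Nat.mod_eq_of_lt hrn]
    have Lper : ∀ a : X, ∀ p : ℕ, 0 < p → T^[p] a = a → a ∈ C := by
      intro a p hp hpa
      obtain ⟨m, k, hmk⟩ := aux_merge T (hconn a x₀)
      have hq : ∀ q : ℕ, T^[p * q] a = a := by
        intro q
        induction q with
        | zero => simp
        | succ q ih => rw [Nat.mul_succ, Function.iterate_add_apply, hpa, ih]
      have hNm : m + 1 ≤ p * (m + 1) := Nat.le_mul_of_pos_left _ hp
      have ha : a = T^[(p * (m + 1) - m) + k] x₀ :=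
        calc a = T^[p * (m + 1)] a := (hq (m + 1)).symm
          _ = T^[(p * (m + 1) - m) + m] a := by congr 1; omega
          _ = T^[p * (m + 1) - m] (T^[m] a) := Function.iterate_add_apply T _ m a
          _ = T^[p * (m + 1) - m] (T^[k] x₀) := by rw [hmk]
          _ = T^[(p * (m + 1) - m) + k] x₀ := (Function.iterate_add_apply T _ k x₀).symm
      rw [ha]
      exact memC _
    have hreach : ∀ v : X, ∃ m : ℕ, T^[m] v ∈ C := by
      intro v
      obtain ⟨m, k, hmk⟩ := aux_merge T (hconn v x₀)
      exact ⟨m, by rw [hmk]; exact memC k⟩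
    set M : X → ℕ := fun v => Nat.find (hreach v) with hM
    have hMspec : ∀ v, T^[M v] v ∈ C := fun v => Nat.find_spec (hreach v)
    have hMmin : ∀ v, ∀ k, k < M v → T^[k] v ∉ C := fun v k hk => Nat.find_min (hreach v) hk
    have hMpos : ∀ v, v ∉ C → 0 < M v := by
      intro v hv
      rcases Nat.eq_zero_or_pos (M v) with h0 | h0
      · exact absurd (by have := hMspec v; rwa [h0] at this) hv
      · exact h0
    set root : X → X := fun v => T^[M v - 1] v with hroot
    have hrootC : ∀ v, v ∉ C → root v ∉ C := fun v hv =>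
      hMmin v _ (by have := hMpos v hv; omega)
    have hTroot : ∀ v, v ∉ C → T (root v) ∈ C := by
      intro v hv
      have h1 : M v - 1 + 1 = M v := by have := hMpos v hv; omega
      have h2 : T (root v) = T^[M v] v := by
        conv_rhs => rw [← h1]
        exact (Function.iterate_succ_apply' T (M v - 1) v).symm
      rw [h2]; exact hMspec v
    have hMT : ∀ v, v ∉ C → M (T v) = M v - 1 := by
      intro v hv
      have hpos := hMpos v hv
      have hle : M (T v) ≤ M v - 1 := by
        apply Nat.find_min' (hreach (T v))
        rw [← Function.iterate_succ_apply, show Nat.succ (M v - 1) = M v by omega]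
        exact hMspec v
      have hge : ¬ M (T v) < M v - 1 := by
        intro h
        exact hMmin v (M (T v) + 1) (by omega)
          (by rw [Function.iterate_succ_apply]; exact hMspec (T v))
      omega
    have hrootT : ∀ v, v ∉ C → T v ∉ C → root (T v) = root v := by
      intro v hv hTv
      have h2 : 0 < M (T v) := hMpos _ hTv
      have hMv : M (T v) = M v - 1 := hMT v hv
      show T^[M (T v) - 1] (T v) = T^[M v - 1] v
      rw [← Function.iterate_succ_apply]
      congr 1
      omega
    have hrootroot : ∀ v, v ∉ C → root (root v) = root v := by
      intro v hv
      have h1 : M (root v) ≤ 1 := Nat.find_min' (hreach (root v)) (by simpa using hTroot v hv)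
      have h2 : 0 < M (root v) := hMpos _ (hrootC v hv)
      show T^[M (root v) - 1] (root v) = root v
      rw [show M (root v) - 1 = 0 by omega]
      simp
    set B : X → Set X := fun v => {w | w ∉ C ∧ root w = root v} with hB
    have hBv : ∀ v, v ∉ C → v ∈ B v := fun v hv => ⟨hv, rfl⟩
    have hBeq : ∀ v w, root v = root w → B v = B w := by
      intro v w h
      ext u
      simp only [hB, Set.mem_setOf_eq, h]
    have key : ∀ m : ℕ, ∀ v, v ∉ C → M v = m + 1 →
        Relation.ReflTransGen
          (fun s t => (T t = s ∧ s ∈ B v ∧ t ∈ B v) ∨ (T s = t ∧ s ∈ B v ∧ t ∈ B v))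
          v (root v) := by
      intro m
      induction m with
      | zero =>
        intro v hv hMv
        have hr : root v = v := by
          show T^[M v - 1] v = v
          rw [hMv]
          simp
        rw [hr]
      | succ m ih =>
        intro v hv hMv
        have hTv : T v ∉ C := by
          intro h
          have : M v ≤ 1 := Nat.find_min' (hreach v) (by simpa using h)
          omega
        have h1 : M (T v) = m + 1 := by rw [hMT v hv]; omega
        have h2 : root (T v) = root v := hrootT v hv hTv
        have h3 := ih (T v) hTv h1
        rw [h2, hBeq (T v) v h2] at h3
        exact Relation.ReflTransGen.head (Or.inr ⟨rfl, hBv v hv, hTv, h2⟩) h3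
    refine ⟨⟨κ, f, hinj, hcyc, {S | ∃ v, v ∉ C ∧ S = B v}, ?_, ?_, ?_, ?_⟩, ?_⟩
    · rintro R ⟨v, hv, rfl⟩
      exact ⟨v, hBv v hv⟩
    · rintro R ⟨v, hv, rfl⟩ R' ⟨w, hw, rfl⟩ hne
      rw [Set.disjoint_left]
      intro u hu hu'
      exact hne (hBeq v w (hu.2.symm.trans hu'.2))
    · ext x
      simp only [Set.mem_sUnion, Set.mem_setOf_eq]
      constructor
      · rintro ⟨S, ⟨v, hv, rfl⟩, hx⟩
        exact hx.1
      · intro hx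
        exact ⟨B x, ⟨x, hx, rfl⟩, hBv x hx⟩
    · rintro R ⟨v₀, hv₀, rfl⟩
      have hsym : Symmetric (fun s t : X =>
          (T t = s ∧ s ∈ B v₀ ∧ t ∈ B v₀) ∨ (T s = t ∧ s ∈ B v₀ ∧ t ∈ B v₀)) := by
        intro s t h
        tauto
      refine ⟨?_, ?_, ?_⟩
      · intro a ha b hb
        have hra : root a = root v₀ := ha.2
        have hrb : root b = root v₀ := hb.2
        have ka := key (M a - 1) a ha.1 (by have := hMpos a ha.1; omega)
        have kb := key (M b - 1) b hb.1 (by have := hMpos b hb.1; omega)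
        rw [hra, hBeq a v₀ hra] at ka
        rw [hrb, hBeq b v₀ hrb] at kb
        exact ka.trans (@Std.Symm.symm _ _ (@Relation.ReflTransGen.stdSymm _ _ ⟨hsym⟩) _ _ kb)
      · rintro a b ⟨hab, haR, hbR⟩ h
        obtain ⟨m, hm⟩ := aux_chainR T _ h
        have : T^[m + 1] a = a := by rw [Function.iterate_succ_apply', hm, hab]
        exact haR.1 (Lper a (m + 1) (Nat.succ_pos m) this)
      · refine ⟨root v₀, ⟨hrootC v₀ hv₀, hrootroot v₀ hv₀⟩, ?_, ?_⟩
        · intro x hx hTx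
          exact hx.1 (hTx ▸ hTroot v₀ hv₀)
        · obtain ⟨i, hi⟩ := hTroot v₀ hv₀
          exact ⟨i, hi.symm, fun j hj => hinj (hj.symm.trans hi.symm)⟩
    · rintro ⟨h1, -, -⟩
      have hb : T (T^[κ] x₀) = x₀ := by
        rw [← Function.iterate_succ_apply' T κ x₀]
        exact hiter
      exact h1 x₀ (T^[κ] x₀) hb (aux_down T κ x₀)
  · -- case (1)
    left
    constructor
    · refine ⟨?_, fun x a b ha hb => ha ▸ hb ▸ rfl, fun v => ⟨T v, rfl⟩⟩
      intro a b hab h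
      obtain ⟨m, hm⟩ := aux_chain T h
      exact hper ⟨a, m + 1, Nat.succ_pos m, by
        rw [Function.iterate_succ_apply', hm, hab]⟩
    · rintro ⟨κ, f, hinj, hcyc, -⟩
      have := aux_cyc_iter T f hcyc (κ + 1) 0
      rw [Fin.natCast_self, add_zero] at this
      exact hper ⟨f 0, κ + 1, Nat.succ_pos κ, this⟩
end

section
/- Suppose S is a bounded operator on a Hilbert space H with orthonormal basis (e_v)_{v ∈ V} such that S^n e_u ⟂ S^n e_v for all n and all u ≠ v. Fix m ≥ 1 and suppose for each v ∈ V there is a polynomial p_v ∈ ℝ_{m-1}[x] with p_v(n) = ‖S^n e_v‖² for all n ∈ ℕ. Then for every f ∈ H there exists a polynomial p_f ∈ ℝ_{m-1}[x] with p_f(n) = ‖S^n f‖² for all n ∈ ℕ (equivalently, S is m-isometric). -/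
open Finset Function Polynomial

private lemma inner_self_c' {H : Type*} [NormedAddCommGroup H] [InnerProductSpace ℂ H] (x : H) :
    (inner ℂ x x : ℂ) = ((‖x‖^2 : ℝ) : ℂ) := by
  rw [inner_self_eq_norm_sq_to_K]
  show (Complex.ofReal ‖x‖)^2 = Complex.ofReal (‖x‖^2)
  push_cast
  ring

private lemma iterZero' (m : ℕ) : (fwdDiff (1:ℕ))^[m] (fun _ : ℕ => (0:ℝ)) = fun _ => 0 := by
  induction m with
  | zero => rfl
  | succ k ih => rw [Function.iterate_succ_apply, fwdDiff_const]; exact ih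

private lemma poly_fwdDiff_zero' : ∀ (m : ℕ) (p : Polynomial ℝ), p.natDegree < m →
    (fwdDiff (1:ℕ))^[m] (fun n : ℕ => p.eval (n:ℝ)) = fun _ => 0 := by
  intro m
  induction m with
  | zero => intro p hp; exact absurd hp (Nat.not_lt_zero _)
  | succ m IH =>
    intro p hp
    rw [Function.iterate_succ_apply]
    have hΔ : fwdDiff (1:ℕ) (fun n : ℕ => p.eval (n:ℝ))
        = fun n : ℕ => (p.comp (X + C 1) - p).eval (n:ℝ) := by
      funext n
      simp [fwdDiff, Polynomial.eval_comp]
    rw [hΔ]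
    by_cases h0 : p.natDegree = 0
    · obtain ⟨c, rfl⟩ := Polynomial.natDegree_eq_zero.mp h0
      have : (Polynomial.C c).comp (X + C 1) - Polynomial.C c = 0 := by simp
      rw [this]
      simpa using iterZero' m
    · apply IH
      have hp0 : p ≠ 0 := fun h => h0 (by simp [h])
      have hcomp_nd : (p.comp (X + C 1)).natDegree = p.natDegree := by
        rw [Polynomial.natDegree_comp, Polynomial.natDegree_X_add_C, mul_one]
      have hcomp0 : p.comp (X + C 1) ≠ 0 := fun h => by
        rw [h, Polynomial.natDegree_zero] at hcomp_nd; exact h0 hcomp_nd.symm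
      have hdeg : (p.comp (X + C 1)).degree = p.degree := by
        rw [Polynomial.degree_eq_natDegree hcomp0, Polynomial.degree_eq_natDegree hp0, hcomp_nd]
      have h1 : ((X + C 1 : Polynomial ℝ)).natDegree = 1 := Polynomial.natDegree_X_add_C 1
      have hmon : ((X + C 1 : Polynomial ℝ)).leadingCoeff = 1 := Polynomial.monic_X_add_C 1
      have hlc : (p.comp (X + C 1)).leadingCoeff = p.leadingCoeff := by
        rw [Polynomial.leadingCoeff_comp (by rw [h1]; exact one_ne_zero), hmon, one_pow, mul_one]
      have hlt : (p.comp (X + C 1) - p).degree < p.degree :=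
        hdeg ▸ Polynomial.degree_sub_lt hdeg hcomp0 hlc
      rcases eq_or_ne (p.comp (X + C 1) - p) 0 with hq | hq
      · rw [hq, Polynomial.natDegree_zero]; omega
      · have := Polynomial.natDegree_lt_natDegree hq hlt
        omega

private lemma exists_poly_of_fwdDiff' (m : ℕ) (hm : 1 ≤ m) (a : ℕ → ℝ)
    (ha : ∀ n, (fwdDiff (1:ℕ))^[m] a n = 0) :
    ∃ p : Polynomial ℝ, p.natDegree ≤ m - 1 ∧ ∀ n : ℕ, p.eval (n : ℝ) = a n := by
  refine ⟨∑ k ∈ range m,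
      Polynomial.C ((fwdDiff (1:ℕ))^[k] a 0 / k.factorial) * descPochhammer ℝ k, ?_, ?_⟩
  · apply Polynomial.natDegree_sum_le_of_forall_le
    intro k hk
    refine le_trans (Polynomial.natDegree_C_mul_le _ _) ?_
    rw [descPochhammer_natDegree]
    exact Nat.le_sub_one_of_lt (mem_range.mp hk)
  · intro n
    have hdiff : ∀ k, m ≤ k → (fwdDiff (1:ℕ))^[k] a 0 = 0 := by
      intro k hk
      obtain ⟨j, rfl⟩ := Nat.exists_eq_add_of_le hk
      rw [Nat.add_comm, Function.iterate_add_apply]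
      have : (fwdDiff (1:ℕ))^[m] a = fun _ => 0 := funext ha
      rw [this, iterZero']
    have key : ∀ N, m ≤ N → n + 1 ≤ N →
        a n = ∑ k ∈ range N, (n.choose k : ℝ) * (fwdDiff (1:ℕ))^[k] a 0 := by
      intro N hmN hnN
      have := shift_eq_sum_fwdDiff_iter (1:ℕ) a n 0
      simp only [zero_add, smul_eq_mul, nsmul_eq_mul, mul_one] at this
      rw [this]
      apply Finset.sum_subset (by intro x hx; simp_all [mem_range]; omega)
      intro x _ hx
      simp only [mem_range, not_lt] at hx
      rw [Nat.choose_eq_zero_of_lt (by omega)]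
      simp
    rw [Polynomial.eval_finset_sum]
    have key2 : ∀ k ∈ range m,
        (Polynomial.C ((fwdDiff (1:ℕ))^[k] a 0 / k.factorial) * descPochhammer ℝ k).eval (n:ℝ)
          = (n.choose k : ℝ) * (fwdDiff (1:ℕ))^[k] a 0 := by
      intro k _
      rw [Polynomial.eval_mul, Polynomial.eval_C, descPochhammer_eval_eq_descFactorial,
        Nat.descFactorial_eq_factorial_mul_choose]
      push_cast
      field_simp
    rw [Finset.sum_congr rfl key2]
    by_cases h : n + 1 ≤ m
    · exact (key m le_rfl h).symm
    · rw [key (n+1) (by omega) le_rfl]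
      apply Finset.sum_subset (by intro x hx; simp_all [mem_range]; omega)
      intro x _ hx
      simp only [mem_range, not_lt] at hx
      rw [hdiff x (by omega)]
      ring

/-- Let `S` be a bounded operator on a Hilbert space `H` with orthonormal basis
`(e_v)_{v ∈ V}` such that `Sⁿ e_u ⟂ Sⁿ e_v` for all `n` and all `u ≠ v`.  Fix `m ≥ 1` and
suppose that for every `v` there is a real polynomial `p_v` of degree at most `m - 1`
with `p_v(n) = ‖Sⁿ e_v‖²` for all `n ∈ ℕ`.  Then for every `f ∈ H` there is a real
polynomial `p_f` of degree at most `m - 1` with `p_f(n) = ‖Sⁿ f‖²` for all `n`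
(equivalently, `S` is `m`-isometric). -/
theorem stmt_12 {V : Type*} {H : Type*} [NormedAddCommGroup H] [InnerProductSpace ℂ H]
    [CompleteSpace H] (b : HilbertBasis V ℂ H) (S : H →L[ℂ] H) (m : ℕ) (hm : 1 ≤ m)
    (horth : ∀ n : ℕ, ∀ u v : V, u ≠ v → inner ℂ ((S ^ n) (b u)) ((S ^ n) (b v)) = (0 : ℂ))
    (hpoly : ∀ v : V, ∃ p : Polynomial ℝ, p.natDegree ≤ m - 1 ∧
      ∀ n : ℕ, p.eval (n : ℝ) = ‖(S ^ n) (b v)‖ ^ 2) :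
    ∀ f : H, ∃ p : Polynomial ℝ, p.natDegree ≤ m - 1 ∧
      ∀ n : ℕ, p.eval (n : ℝ) = ‖(S ^ n) f‖ ^ 2 := by
  classical
  -- The `m`-th difference operator applied to `S`
  set T : H →L[ℂ] H := ∑ k ∈ Finset.range (m+1),
      (((-1 : ℝ)^(m - k) * (m.choose k) : ℝ) : ℂ) •
        ((ContinuousLinearMap.adjoint (S^k)).comp (S^k)) with hTdef
  have hT : ∀ x y : H, (inner ℂ x (T y) : ℂ) = ∑ k ∈ Finset.range (m+1),
      (((-1 : ℝ)^(m - k) * (m.choose k) : ℝ) : ℂ) * inner ℂ ((S^k) x) ((S^k) y) := by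
    intro x y
    rw [hTdef]
    simp only [ContinuousLinearMap.sum_apply, ContinuousLinearMap.coe_smul',
      Pi.smul_apply, ContinuousLinearMap.comp_apply, inner_sum, inner_smul_right,
      ContinuousLinearMap.adjoint_inner_right]
  -- T vanishes on basis vectors
  have hTb : ∀ u : V, T (b u) = 0 := by
    intro u
    have h1 : ∀ v : V, (inner ℂ (b v) (T (b u)) : ℂ) = 0 := by
      intro v
      rw [hT]
      rcases eq_or_ne v u with rfl | hvu
      · obtain ⟨p, hpdeg, hpev⟩ := hpoly v
        have hz := congrFun (poly_fwdDiff_zero' m p (by omega)) 0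
        rw [fwdDiff_iter_eq_sum_shift] at hz
        simp only [zero_add, smul_eq_mul, mul_one, zsmul_eq_mul] at hz
        have hreal : ∑ k ∈ Finset.range (m+1),
            ((-1 : ℝ)^(m - k) * (m.choose k)) * ‖(S^k) (b v)‖ ^ 2 = 0 := by
          rw [← hz]
          apply Finset.sum_congr rfl
          intro k _
          rw [hpev k]
          push_cast
          try ring
        have hcast : (∑ k ∈ Finset.range (m+1),
            (((-1 : ℝ)^(m - k) * (m.choose k) : ℝ) : ℂ) * inner ℂ ((S^k) (b v)) ((S^k) (b v)))
            = ((∑ k ∈ Finset.range (m+1),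
              ((-1 : ℝ)^(m - k) * (m.choose k)) * ‖(S^k) (b v)‖ ^ 2 : ℝ) : ℂ) := by
          push_cast
          apply Finset.sum_congr rfl
          intro k _
          rw [inner_self_c']
          push_cast
          ring
        rw [hcast, hreal, Complex.ofReal_zero]
      · apply Finset.sum_eq_zero
        intro k _
        rw [horth k v u hvu, mul_zero]
    have h2 : b.repr (T (b u)) = 0 := by
      ext v
      rw [b.repr_apply_apply, h1 v]
      rfl
    have := congrArg b.repr.symm h2
    rwa [LinearIsometryEquiv.symm_apply_apply, map_zero] at this
  -- hence T = 0
  have hT0 : ∀ x : H, T x = 0 := by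
    have hd : Dense ((Submodule.span ℂ (Set.range (b : V → H)) : Submodule ℂ H) : Set H) :=
      Submodule.dense_iff_topologicalClosure_eq_top.mpr b.dense_span
    have heq : (T : H → H) = ((0 : H →L[ℂ] H) : H → H) := by
      refine Continuous.ext_on hd T.continuous (0 : H →L[ℂ] H).continuous ?_
      intro x hx
      have hx' : x ∈ Submodule.span ℂ (Set.range (b : V → H)) := hx
      induction hx' using Submodule.span_induction with
      | mem y hy =>
          obtain ⟨u, rfl⟩ := hy
          simpa using hTb u
      | zero => simp
      | add y z hym hzm hy hz =>
          have h1 : T y = 0 := by simpa using hy hym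
          have h2 : T z = 0 := by simpa using hz hzm
          simp only [map_add, ContinuousLinearMap.zero_apply, h1, h2, add_zero]
      | smul c y hym hy =>
          have h1 : T y = 0 := by simpa using hy hym
          simp only [map_smul, ContinuousLinearMap.zero_apply, h1, smul_zero]
    intro x
    simpa using congrFun heq x
  intro f
  set a : ℕ → ℝ := fun j => ‖(S ^ j) f‖ ^ 2 with ha_def
  have hrec : ∀ n : ℕ, ∑ k ∈ Finset.range (m+1),
      ((-1 : ℝ)^(m - k) * (m.choose k)) * a (n + k) = 0 := by
    intro n
    have h3 := hT ((S^n) f) ((S^n) f)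
    rw [hT0, inner_zero_right] at h3
    have h4 : ∀ k ∈ Finset.range (m+1),
        (((-1 : ℝ)^(m - k) * (m.choose k) : ℝ) : ℂ) * inner ℂ ((S^k) ((S^n) f)) ((S^k) ((S^n) f))
        = ((((-1 : ℝ)^(m - k) * (m.choose k)) * a (n + k) : ℝ) : ℂ) := by
      intro k _
      have hx : (S^k) ((S^n) f) = (S^(n+k)) f := by
        rw [add_comm, pow_add, ContinuousLinearMap.mul_apply]
      rw [hx, inner_self_c', ha_def]
      push_cast
      ring
    rw [Finset.sum_congr rfl h4, ← Complex.ofReal_sum] at h3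
    exact_mod_cast h3.symm
  have ha : ∀ n, (fwdDiff (1:ℕ))^[m] a n = 0 := by
    intro n
    rw [fwdDiff_iter_eq_sum_shift]
    simp only [smul_eq_mul, mul_one, zsmul_eq_mul]
    rw [← hrec n]
    apply Finset.sum_congr rfl
    intro k _
    push_cast
    ring
  obtain ⟨p, hdeg, hev⟩ := exists_poly_of_fwdDiff' m hm a ha
  exact ⟨p, hdeg, hev⟩
end

section
/- Let S = S_{λ_T} be the weighted shift associated to T : X → X with connected graph G_T of cycle type (cycle v_0,…,v_{κ-1}, attached trees R). If S is an isometry, then R = ∅, i.e. V_T = {v_0,…,v_{κ-1}}; in particular ℓ²(V_T) is finite dimensional and S is unitary. -/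
open scoped ENNReal

/-- Evaluation at a coordinate as a continuous linear map on `ℓ²`. -/
noncomputable def evalCLM17 {X : Type*} (x0 : X) : lp (fun _ : X => ℂ) 2 →L[ℂ] ℂ :=
  LinearMap.mkContinuous
    { toFun := fun f => f x0
      map_add' := fun f g => rfl
      map_smul' := fun c f => rfl } 1
    (fun f => by
      change ‖f x0‖ ≤ 1 * ‖f‖; simpa using lp.norm_apply_le_norm (by norm_num : (2:ℝ≥0∞) ≠ 0) f x0)

lemma tsum_coeff17 {X : Type*} [DecidableEq X] (P : X → Prop) (x0 : X) (h0 : P x0)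
    (c : {x : X // P x} → ℂ)
    (hsum : Summable (fun x : {x : X // P x} => c x • lp.single (E := fun _ : X => ℂ) 2 (x:X) 1)) :
    (∑' x : {x : X // P x}, c x • lp.single (E := fun _ : X => ℂ) 2 (x:X) 1) x0 = c ⟨x0, h0⟩ := by
  calc (∑' x : {x : X // P x}, c x • lp.single (E := fun _ : X => ℂ) 2 (x:X) 1) x0
      = evalCLM17 x0 (∑' x : {x : X // P x}, c x • lp.single (E := fun _ : X => ℂ) 2 (x:X) 1) :=
        rfl
    _ = ∑' x : {x : X // P x}, evalCLM17 x0 (c x • lp.single (E := fun _ : X => ℂ) 2 (x:X) 1) :=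
        ContinuousLinearMap.map_tsum _ hsum
    _ = ∑' x : {x : X // P x}, c x • ((lp.single (E := fun _ : X => ℂ) 2 (x:X) 1) x0) := by
        refine tsum_congr fun x => ?_
        rw [map_smul]; rfl
    _ = c ⟨x0, h0⟩ := by
        rw [tsum_eq_single (⟨x0, h0⟩ : {x : X // P x})]
        · simp [lp.single_apply_self]
        · intro b hb
          have hne : x0 ≠ (b : X) := fun h => hb (Subtype.ext h.symm)
          simp [lp.single_apply_ne 2 (b : X) _ hne, Pi.single_apply, hne]

/-- Let `S` be the weighted shift on `ℓ²(X)` associated to `T : X → X` with connected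
graph `G_T` of cycle type (cycle `v_0, …, v_{κ-1}`).  If `S` is an isometry, then there
are no attached trees: every vertex lies on the cycle.  In particular `ℓ²(X)` is finite
dimensional and `S` is unitary (a surjective isometry). -/
theorem stmt_17 {X : Type*} [Countable X] [DecidableEq X]
    (w : X → ℝ) (hw : ∀ x, 0 < w x) (T : X → X)
    (hconn : ∀ x y : X, Relation.ReflTransGen (fun a b => T b = a ∨ T a = b) x y)
    (hT : ∃ B : ℝ, ∀ u : X, ∑' (x : {x : X // T x = u}), w x ≤ B * w u)
    (S : lp (fun _ : X => ℂ) 2 →L[ℂ] lp (fun _ : X => ℂ) 2)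
    (hS : ∀ u : X, S (lp.single 2 u (1:ℂ)) =
      ∑' (x : {x : X // T x = u}),
        ((Real.sqrt (w x / w (T (x : X))) : ℝ) : ℂ) •
          lp.single (E := fun _ : X => ℂ) 2 (x : X) 1)
    (κ : ℕ) (hκ : 1 ≤ κ) (v : ℕ → X)
    (hper : ∀ j : ℕ, v (j + κ) = v j)
    (hcyc : ∀ j : ℕ, T (v (j + 1)) = v j)
    (hinj : ∀ i < κ, ∀ j < κ, v i = v j → i = j)
    (hiso : ∀ f : lp (fun _ : X => ℂ) 2, ‖S f‖ = ‖f‖) :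
    (∀ x : X, ∃ j < κ, x = v j) ∧
      FiniteDimensional ℂ (lp (fun _ : X => ℂ) 2) ∧
      Function.Surjective S := by
  -- norm of basis vectors
  have hns : ∀ u : X, ‖lp.single (E := fun _ : X => ℂ) 2 u 1‖ = 1 := fun u => by
    simpa using lp.norm_single (p := 2) (by norm_num) (fun _ : X => (1:ℂ)) u
  -- coefficient formula
  have hcoef : ∀ u x0 : X, T x0 = u →
      (S (lp.single 2 u 1)) x0 = ((Real.sqrt (w x0 / w u) : ℝ) : ℂ) := by
    intro u x0 h
    by_cases hsum : Summable (fun x : {x : X // T x = u} =>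
        ((Real.sqrt (w x / w (T (x : X))) : ℝ) : ℂ) • lp.single (E := fun _ : X => ℂ) 2 (x:X) 1)
    · rw [hS u, tsum_coeff17 (fun x => T x = u) x0 h _ hsum]
      simp [h]
    · exfalso
      have h0 : S (lp.single 2 u 1) = 0 := by
        rw [hS u, tsum_eq_zero_of_not_summable hsum]
      have h1 := hiso (lp.single 2 u 1)
      rw [h0, norm_zero, hns u] at h1
      norm_num at h1
  have hsq : ∀ r : ℝ, 0 ≤ r → ‖((Real.sqrt r : ℝ) : ℂ)‖ ^ (2:ℝ) = r := by
    intro r hr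
    rw [Complex.norm_real, Real.norm_eq_abs, abs_of_nonneg (Real.sqrt_nonneg r),
      show (2:ℝ) = ((2:ℕ):ℝ) by norm_num, Real.rpow_natCast, Real.sq_sqrt hr]
  have hnorm1 : ∀ u : X, ‖S (lp.single 2 u 1)‖ ^ (2:ℝ) = 1 := by
    intro u; rw [hiso, hns u, Real.one_rpow]
  -- single coefficient bound
  have hbound1 : ∀ u x0 : X, T x0 = u → w x0 / w u ≤ 1 := by
    intro u x0 h0
    have hb := lp.sum_rpow_le_norm_rpow (p := 2) (by norm_num) (S (lp.single 2 u 1)) {x0}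
    rw [Finset.sum_singleton, show ENNReal.toReal 2 = (2:ℝ) by norm_num] at hb
    have e0 : ((S (lp.single 2 u 1)) x0 : ℂ) = _ := hcoef u x0 h0
    rw [e0, hsq _ (div_nonneg (hw x0).le (hw u).le)] at hb
    simpa [hnorm1 u] using hb
  -- two-coefficient bound
  have hbound2 : ∀ u x0 x1 : X, T x0 = u → T x1 = u → x0 ≠ x1 →
      w x0 / w u + w x1 / w u ≤ 1 := by
    intro u x0 x1 h0 h1 hne
    have hb := lp.sum_rpow_le_norm_rpow (p := 2) (by norm_num) (S (lp.single 2 u 1)) {x0, x1}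
    rw [Finset.sum_pair hne, show ENNReal.toReal 2 = (2:ℝ) by norm_num] at hb
    rw [hcoef u x0 h0, hcoef u x1 h1, hsq _ (div_nonneg (hw x0).le (hw u).le),
      hsq _ (div_nonneg (hw x1).le (hw u).le)] at hb
    simpa [hnorm1 u] using hb
  -- weights nonincreasing around the cycle
  have hdec : ∀ j : ℕ, w (v (j+1)) ≤ w (v j) := fun j =>
    (div_le_one (hw (v j))).mp (hbound1 (v j) (v (j+1)) (hcyc j))
  have hmono : ∀ a b : ℕ, w (v (a + b)) ≤ w (v a) := by
    intro a b
    induction b with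
    | zero => exact le_refl _
    | succ n ih =>
      calc w (v (a + (n+1))) = w (v ((a+n)+1)) := by ring_nf
        _ ≤ w (v (a+n)) := hdec _
        _ ≤ w (v a) := ih
  have heq : ∀ j : ℕ, w (v (j+1)) = w (v j) := by
    intro j
    refine le_antisymm (hdec j) ?_
    have h1 : w (v (j + 1 + (κ - 1))) ≤ w (v (j+1)) := hmono _ _
    have h2 : j + 1 + (κ - 1) = j + κ := by omega
    rw [h2, hper j] at h1
    exact h1
  -- unique preimages on the cycle
  have hfib : ∀ (j : ℕ) (x : X), T x = v j → x = v (j+1) := by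
    intro j x hx
    by_contra hne
    have hb := hbound2 (v j) x (v (j+1)) hx (hcyc j) hne
    rw [heq j, div_self (ne_of_gt (hw (v j)))] at hb
    have hpos : 0 < w x / w (v j) := div_pos (hw x) (hw (v j))
    linarith
  -- everything lies on the cycle
  have hall : ∀ x : X, ∃ j : ℕ, x = v j := by
    intro x
    have h := hconn (v 0) x
    induction h with
    | refl => exact ⟨0, rfl⟩
    | tail _ r ih =>
      obtain ⟨j, rfl⟩ := ih
      rcases r with h | h
      · exact ⟨j + 1, hfib j _ h⟩
      · refine ⟨j + κ - 1, ?_⟩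
        have h2 : (j + κ - 1) + 1 = j + κ := by omega
        have h3 : T (v ((j + κ - 1) + 1)) = v (j + κ - 1) := hcyc _
        rw [h2, hper j] at h3
        rw [← h, h3]
  have hmod : ∀ j : ℕ, v j = v (j % κ) := by
    intro j
    induction j using Nat.strong_induction_on with
    | _ j ih =>
      by_cases hj : j < κ
      · rw [Nat.mod_eq_of_lt hj]
      · have h1 : j - κ + κ = j := by omega
        have h2 := hper (j - κ)
        rw [h1] at h2
        rw [h2, ih (j - κ) (by omega)]
        exact congrArg v (Nat.mod_eq_sub_mod (by omega)).symm
  have hall' : ∀ x : X, ∃ j < κ, x = v j := by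
    intro x
    obtain ⟨j, rfl⟩ := hall x
    exact ⟨j % κ, Nat.mod_lt _ (by omega), hmod j⟩
  -- finiteness
  have hsurjv : Function.Surjective (fun i : Fin κ => v i) := by
    intro x
    obtain ⟨j, hj, rfl⟩ := hall' x
    exact ⟨⟨j, hj⟩, rfl⟩
  haveI : Finite X := Finite.of_surjective _ hsurjv
  haveI : Fintype X := Fintype.ofFinite X
  haveI hfd : FiniteDimensional ℂ (lp (fun _ : X => ℂ) 2) :=
    LinearEquiv.finiteDimensional (lpPiLpₗᵢ (fun _ : X => ℂ) ℂ).toLinearEquiv.symm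
  refine ⟨hall', hfd, ?_⟩
  have hSinj : Function.Injective S := by
    intro f g hfg
    have h1 : ‖S (f - g)‖ = ‖f - g‖ := hiso _
    rw [map_sub, hfg, sub_self, norm_zero] at h1
    exact sub_eq_zero.mp (norm_eq_zero.mp h1.symm)
  exact LinearMap.surjective_of_injective (f := (S : lp (fun _ : X => ℂ) 2 →ₗ[ℂ] lp (fun _ : X => ℂ) 2)) hSinj
end

section
/- Let μ be a finite positive Borel measure on [0,1], κ ≥ 1, D ∈ [0,1) and C ≥ 0 such that ∫ t^{n+κ} dμ(t) = D ∫ t^n dμ(t) + C for every n ∈ ℕ. Then μ is supported on {D^{1/κ}, 1}; i.e. μ = (1-α)·a·δ_{D^{1/κ}} + α·a·δ_1 where a = μ([0,1]) and α·a·(1-D) = C. -/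
open MeasureTheory

/-- Let `μ` be a finite positive Borel measure on `[0,1]`, `κ ≥ 1`, `D ∈ [0,1)` and
`C ≥ 0` such that `∫ t^{n+κ} dμ = D ∫ t^n dμ + C` for every `n ∈ ℕ`.  Then `μ` is
supported on `{D^{1/κ}, 1}`: writing `a = μ([0,1])`, we have
`μ = (1-α)·a·δ_{D^{1/κ}} + α·a·δ_1` for some `α ∈ [0,1]` with `α·a·(1-D) = C`. -/
theorem stmt_19 (μ : Measure ℝ) [IsFiniteMeasure μ]
    (hsupp : μ (Set.Icc (0:ℝ) 1)ᶜ = 0)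
    (κ : ℕ) (hκ : 1 ≤ κ) (D : ℝ) (hD : D ∈ Set.Ico (0:ℝ) 1) (C : ℝ) (hC : 0 ≤ C)
    (hrec : ∀ n : ℕ, ∫ t, t ^ (n + κ) ∂μ = D * ∫ t, t ^ n ∂μ + C) :
    ∃ α ∈ Set.Icc (0:ℝ) 1,
      μ = ENNReal.ofReal ((1 - α) * (μ Set.univ).toReal) •
            Measure.dirac (D ^ ((1:ℝ) / κ)) +
          ENNReal.ofReal (α * (μ Set.univ).toReal) • Measure.dirac 1 ∧
      α * (μ Set.univ).toReal * (1 - D) = C := by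
  obtain ⟨hD0, hD1⟩ := hD
  set r : ℝ := D ^ ((1:ℝ) / κ) with hrdef
  have hκ0 : κ ≠ 0 := by omega
  have hrκ : r ^ κ = D := by
    rw [hrdef, one_div, Real.rpow_inv_natCast_pow hD0 hκ0]
  have hr0 : 0 ≤ r := Real.rpow_nonneg hD0 _
  have hr1 : r < 1 :=
    Real.rpow_lt_one hD0 hD1 (by positivity)
  have hrne : r ≠ 1 := ne_of_lt hr1
  have hae : ∀ᵐ t ∂μ, t ∈ Set.Icc (0:ℝ) 1 := by
    rw [ae_iff]
    simpa [Set.compl_def] using hsupp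
  -- integrability helper
  have hint : ∀ f : ℝ → ℝ, Measurable f → (∀ t ∈ Set.Icc (0:ℝ) 1, |f t| ≤ 1) →
      Integrable f μ := by
    intro f hf hb
    exact (integrable_const (1:ℝ)).mono' hf.aestronglyMeasurable
      (hae.mono fun t ht => by simpa [Real.norm_eq_abs] using hb t ht)
  have hbsq : ∀ t ∈ Set.Icc (0:ℝ) 1, (t ^ κ - D) ^ 2 ≤ 1 := by
    intro t ht
    have h1 : t ^ κ ≤ 1 := pow_le_one₀ ht.1 ht.2
    have h2 : 0 ≤ t ^ κ := pow_nonneg ht.1 κ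
    nlinarith
  have hintn : ∀ n : ℕ, Integrable (fun t => t ^ n) μ := by
    intro n
    refine hint _ (measurable_id.pow_const n) fun t ht => ?_
    rw [abs_pow]
    exact pow_le_one₀ (abs_nonneg t) (abs_le.mpr ⟨by linarith [ht.1], ht.2⟩)
  have hQint : ∀ n : ℕ, Integrable (fun t => t ^ n * (t ^ κ - D) ^ 2) μ := by
    intro n
    refine hint _ (by fun_prop) fun t ht => ?_
    rw [abs_mul]
    have h1 : |t ^ n| ≤ 1 := by
      rw [abs_pow]
      exact pow_le_one₀ (abs_nonneg t) (abs_le.mpr ⟨by linarith [ht.1], ht.2⟩)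
    have h2 : |(t ^ κ - D) ^ 2| ≤ 1 := by
      rw [abs_of_nonneg (sq_nonneg _)]
      exact hbsq t ht
    nlinarith [abs_nonneg (t ^ n), abs_nonneg ((t ^ κ - D) ^ 2)]
  have hQ : ∀ n : ℕ, ∫ t, t ^ n * (t ^ κ - D) ^ 2 ∂μ = C * (1 - D) := by
    intro n
    have heq : (fun t : ℝ => t ^ n * (t ^ κ - D) ^ 2)
        = fun t => (t ^ (n + 2 * κ) - 2 * D * t ^ (n + κ)) + D ^ 2 * t ^ n := by
      funext t
      have : n + 2 * κ = n + κ + κ := by ring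
      rw [this, pow_add, pow_add]
      ring
    have i1 : Integrable (fun t : ℝ => t ^ (n + 2 * κ) - 2 * D * t ^ (n + κ)) μ :=
      (hintn _).sub ((hintn _).const_mul _)
    have i2 : Integrable (fun t : ℝ => D ^ 2 * t ^ n) μ := (hintn _).const_mul _
    have i3 : Integrable (fun t : ℝ => 2 * D * t ^ (n + κ)) μ := (hintn _).const_mul _
    rw [heq, integral_add i1 i2, integral_sub (hintn _) i3, integral_const_mul,
      integral_const_mul]
    have e1 : n + 2 * κ = (n + κ) + κ := by ring
    rw [e1, hrec (n + κ), hrec n]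
    ring
  have hP0 : ∫ t, ((1 - t) * (t ^ κ - D)) ^ 2 ∂μ = 0 := by
    have heq : (fun t : ℝ => ((1 - t) * (t ^ κ - D)) ^ 2)
        = fun t => (t ^ 0 * (t ^ κ - D) ^ 2 - 2 * (t ^ 1 * (t ^ κ - D) ^ 2))
            + t ^ 2 * (t ^ κ - D) ^ 2 := by
      funext t; ring
    have j1 : Integrable (fun t : ℝ => t ^ 0 * (t ^ κ - D) ^ 2
        - 2 * (t ^ 1 * (t ^ κ - D) ^ 2)) μ := (hQint 0).sub ((hQint 1).const_mul 2)
    have j2 : Integrable (fun t : ℝ => 2 * (t ^ 1 * (t ^ κ - D) ^ 2)) μ :=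
      (hQint 1).const_mul 2
    rw [heq, integral_add j1 (hQint 2), integral_sub (hQint 0) j2, integral_const_mul,
      hQ 0, hQ 1, hQ 2]
    ring
  have hPint : Integrable (fun t => ((1 - t) * (t ^ κ - D)) ^ 2) μ := by
    refine hint _ (by fun_prop) fun t ht => ?_
    rw [abs_of_nonneg (sq_nonneg _), mul_pow]
    have h1 : (1 - t) ^ 2 ≤ 1 := by nlinarith [ht.1, ht.2]
    have h2 := hbsq t ht
    nlinarith [sq_nonneg (1 - t), sq_nonneg (t ^ κ - D)]
  have hsq : ∀ᵐ t ∂μ, ((1 - t) * (t ^ κ - D)) ^ 2 = 0 := by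
    have := (integral_eq_zero_iff_of_nonneg (fun t => sq_nonneg _) hPint).mp hP0
    filter_upwards [this] with t ht
    simpa using ht
  have hmem : ∀ᵐ t ∂μ, t ∈ ({r, 1} : Set ℝ) := by
    filter_upwards [hae, hsq] with t ht h0
    have h0' : (1 - t) * (t ^ κ - D) = 0 := by
      exact pow_eq_zero_iff (two_ne_zero) |>.mp h0
    rcases mul_eq_zero.mp h0' with h | h
    · right
      have : t = 1 := by linarith
      simpa using this
    · left
      have ht1 : t ^ κ = D := by linarith
      rw [hrdef, ← ht1, one_div, Real.pow_rpow_inv_natCast ht.1 hκ0]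
  have hμeq : μ = μ {r} • Measure.dirac r + μ {1} • Measure.dirac 1 := by
    conv_lhs => rw [← Measure.restrict_eq_self_of_ae_mem hmem]
    rw [Set.insert_eq,
      Measure.restrict_union (by simpa using hrne) (measurableSet_singleton 1),
      Measure.restrict_singleton, Measure.restrict_singleton]
  -- compute C
  have hcongr : (fun t : ℝ => t ^ 0 * (t ^ κ - D) ^ 2)
      =ᵐ[μ] ({1} : Set ℝ).indicator (fun _ => (1 - D) ^ 2) := by
    filter_upwards [hmem] with t ht
    rcases ht with h | h
    · subst h
      simp [Set.indicator_of_notMem (by simpa using hrne : r ∉ ({1} : Set ℝ)), hrκ]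
    · simp only [Set.mem_singleton_iff] at h
      subst h
      simp
  have hC1 : C * (1 - D) = (μ {1}).toReal * (1 - D) ^ 2 := by
    rw [← hQ 0, integral_congr_ae hcongr, integral_indicator_const _ (measurableSet_singleton 1)]
    simp [mul_comm, Measure.real]
  have h1D : (1:ℝ) - D ≠ 0 := by linarith
  have hCc : C = (μ {1}).toReal * (1 - D) := by
    apply mul_right_cancel₀ h1D
    rw [hC1]; ring
  set a := (μ Set.univ).toReal with ha
  set c := (μ {1}).toReal with hc
  set b := (μ {r}).toReal with hb
  have hc0 : 0 ≤ c := ENNReal.toReal_nonneg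
  have hb0 : 0 ≤ b := ENNReal.toReal_nonneg
  have hca : c ≤ a := ENNReal.toReal_mono (measure_ne_top μ _)
    (measure_mono (Set.subset_univ _))
  have habc : a = b + c := by
    have h0 := congrArg (fun m : Measure ℝ => m Set.univ) hμeq
    simp only [Measure.coe_add, Pi.add_apply, Measure.coe_smul, Pi.smul_apply,
      Measure.dirac_apply_of_mem (Set.mem_univ _), smul_eq_mul, mul_one] at h0
    rw [ha, h0, ENNReal.toReal_add (measure_ne_top μ _) (measure_ne_top μ _)]
  refine ⟨c / a, ⟨div_nonneg hc0 (by linarith), ?_⟩, ?_, ?_⟩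
  · rcases eq_or_lt_of_le (le_trans hc0 hca) with h | h
    · simp [← h]
    · exact (div_le_one h).mpr hca
  · have hαa : c / a * a = c := by
      rcases eq_or_lt_of_le (le_trans hc0 hca) with h | h
      · rw [← h]; simp; linarith
      · exact div_mul_cancel₀ c (ne_of_gt h)
    have h1αa : (1 - c / a) * a = b := by
      have : (1 - c / a) * a = a - c / a * a := by ring
      rw [this, hαa, habc]; ring
    rw [h1αa, hαa, hc, hb, ENNReal.ofReal_toReal (measure_ne_top μ _),
      ENNReal.ofReal_toReal (measure_ne_top μ _)]
    exact hμeq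
  · have hαa : c / a * a = c := by
      rcases eq_or_lt_of_le (le_trans hc0 hca) with h | h
      · rw [← h]; simp; linarith
      · exact div_mul_cancel₀ c (ne_of_gt h)
    rw [hαa, hCc]
end
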